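/- There exists a universal constant C < ∞ such that for every δ ∈ (0, arsinh(1)) and every ℓ with 0 < ℓ ≤ 2δ, one has π/δ − C ≤ X(ℓ) − X_δ(ℓ) ≤ π²/(2δ), where X(ℓ) = (2π/ℓ)·(π/2 − arctan(sinh(ℓ/2))) and X_δ(ℓ) = (2π/ℓ)·(π/2 − arcsin(sinh(ℓ/2)/sinh(δ))). -/

import Mathlib

open Real Set

lemma my_convexOn_sinh : ConvexOn ℝ (Set.Ici (0:ℝ)) Real.sinh := by
  refine convexOn_of_deriv2_nonneg (convex_Ici 0) Real.continuous_sinh.continuousOn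
    Real.differentiable_sinh.differentiableOn ?_ ?_
  · rw [Real.deriv_sinh]; exact Real.differentiable_cosh.differentiableOn
  · intro x hx
    have h2 : deriv^[2] Real.sinh x = Real.sinh x := by
      simp [Function.iterate_succ_apply', Real.deriv_sinh, Real.deriv_cosh]
    rw [h2]
    rw [interior_Ici, mem_Ioi] at hx
    exact (Real.sinh_pos_iff.2 hx).le

lemma my_sinh_mul_le {a x : ℝ} (ha : 0 ≤ a) (ha1 : a ≤ 1) (hx : 0 ≤ x) :
    Real.sinh (a * x) ≤ a * Real.sinh x := by
  have h := my_convexOn_sinh.2 (mem_Ici.2 hx) (mem_Ici.2 le_rfl) ha (by linarith : (0:ℝ) ≤ 1 - a)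
    (by ring)
  simpa using h

lemma my_sinh_le_mul_cosh {x : ℝ} (hx : 0 ≤ x) : Real.sinh x ≤ x * Real.cosh x := by
  set g : ℝ → ℝ := fun y => y * Real.cosh y - Real.sinh y with hg
  have hder : ∀ y, HasDerivAt g (y * Real.sinh y) y := by
    intro y
    have := ((hasDerivAt_id y).mul (Real.hasDerivAt_cosh y)).sub (Real.hasDerivAt_sinh y)
    have h2 : (1 : ℝ) * Real.cosh y + id y * Real.sinh y - Real.cosh y = y * Real.sinh y := by
      simp
    rw [h2] at this
    exact this
  have hmono : MonotoneOn g (Set.Ici 0) := by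
    refine monotoneOn_of_deriv_nonneg (convex_Ici 0)
      (fun y _ => (hder y).continuousAt.continuousWithinAt)
      (fun y _ => ((hder y).differentiableAt).differentiableWithinAt) ?_
    intro y hy
    rw [interior_Ici, mem_Ioi] at hy
    rw [(hder y).deriv]
    exact mul_nonneg hy.le (Real.sinh_nonneg_iff.2 hy.le)
  have := hmono (mem_Ici.2 le_rfl) (mem_Ici.2 hx) hx
  simpa [hg] using this

lemma my_cosh_le_two {x : ℝ} (hx : |x| ≤ 1) : Real.cosh x ≤ 2 := by
  have h1 : Real.cosh x ≤ Real.cosh 1 := by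
    rw [Real.cosh_le_cosh]; simpa using hx
  have h2 : Real.cosh 1 = (Real.exp 1 + Real.exp (-1)) / 2 := Real.cosh_eq 1
  have h3 : Real.exp 1 < 2.7182818286 := Real.exp_one_lt_d9
  have h4 : Real.exp (-1) ≤ 1 := Real.exp_le_one_iff.2 (by norm_num)
  nlinarith

lemma my_le_arcsin {x : ℝ} (h0 : 0 ≤ x) (h1 : x ≤ 1) : x ≤ Real.arcsin x := by
  have hs : Real.sin (Real.arcsin x) = x := Real.sin_arcsin (by linarith) h1
  have := Real.sin_le (Real.arcsin_nonneg.2 h0)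
  linarith

lemma my_arcsin_le {x : ℝ} (h0 : 0 ≤ x) (h1 : x ≤ 1) :
    Real.arcsin x ≤ Real.pi / 2 * x := by
  have hπ := Real.pi_pos
  have hle := Real.le_sin_mul h0 h1
  have h2 : Real.arcsin x ≤ Real.arcsin (Real.sin (Real.pi / 2 * x)) :=
    Real.monotone_arcsin hle
  rwa [Real.arcsin_sin (by nlinarith) (by nlinarith)] at h2

lemma my_arctan_le_self {x : ℝ} (hx : 0 ≤ x) : Real.arctan x ≤ x := by
  have hnn : 0 ≤ Real.arctan x := by
    have := Real.arctan_strictMono.monotone hx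
    simpa [Real.arctan_zero] using this
  have := Real.le_tan hnn (Real.arctan_lt_pi_div_two x)
  rwa [Real.tan_arctan] at this
/-- Half-length of the hyperbolic collar around a geodesic of length `ℓ`. -/
noncomputable def collarX (ℓ : ℝ) : ℝ :=
  2 * Real.pi / ℓ * (Real.pi / 2 - Real.arctan (Real.sinh (ℓ / 2)))

/-- Half-length of the `δ`-thin part of the hyperbolic collar. -/
noncomputable def collarXdelta (δ ℓ : ℝ) : ℝ :=
  2 * Real.pi / ℓ * (Real.pi / 2 - Real.arcsin (Real.sinh (ℓ / 2) / Real.sinh δ))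

set_option maxHeartbeats 1000000 in
/-- There is a universal constant `C` such that
`π/δ − C ≤ X(ℓ) − X_δ(ℓ) ≤ π²/(2δ)` for all `δ ∈ (0, arsinh 1)` and `0 < ℓ ≤ 2δ`. -/
theorem collarX_sub_collarXdelta_bounds :
    ∃ C : ℝ, ∀ δ : ℝ, 0 < δ → δ < Real.arsinh 1 → ∀ ℓ : ℝ, 0 < ℓ → ℓ ≤ 2 * δ →
      Real.pi / δ - C ≤ collarX ℓ - collarXdelta δ ℓ ∧
      collarX ℓ - collarXdelta δ ℓ ≤ Real.pi ^ 2 / (2 * δ) := by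
  refine ⟨6 * Real.pi, fun δ hδ hδ' ℓ hℓ hℓδ => ?_⟩
  have hπ := Real.pi_pos
  -- δ < 1
  have harsinh : Real.arsinh 1 ≤ 1 := by
    have h1 : Real.arsinh 1 ≤ Real.arsinh (Real.sinh 1) :=
      Real.arsinh_le_arsinh.2 (Real.self_le_sinh_iff.2 zero_le_one)
    rwa [Real.arsinh_sinh] at h1
  have hδ1 : δ < 1 := lt_of_lt_of_le hδ' harsinh
  set t := Real.sinh (ℓ / 2) with ht
  set s := Real.sinh δ with hs
  have hs0 : 0 < s := Real.sinh_pos_iff.2 hδ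
  have hs1 : s < 1 := by
    have : Real.sinh δ < Real.sinh (Real.arsinh 1) := Real.sinh_lt_sinh.2 hδ'
    rwa [Real.sinh_arsinh] at this
  have hl2δ : ℓ / 2 ≤ δ := by linarith
  have ht0 : 0 < t := Real.sinh_pos_iff.2 (by linarith)
  have hts : t ≤ s := Real.sinh_le_sinh.2 hl2δ
  set u := t / s with hu
  have hu0 : 0 ≤ u := le_of_lt (div_pos ht0 hs0)
  have hu1 : u ≤ 1 := (div_le_one hs0).2 hts
  -- upper bound on u : u ≤ ℓ/(2δ)
  have hu2 : u ≤ ℓ / (2 * δ) := by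
    have ha0 : 0 ≤ ℓ / (2 * δ) := by positivity
    have ha1 : ℓ / (2 * δ) ≤ 1 := (div_le_one (by linarith)).2 hℓδ
    have h := my_sinh_mul_le ha0 ha1 hδ.le
    have heq : ℓ / (2 * δ) * δ = ℓ / 2 := by field_simp
    rw [heq] at h
    rw [hu, div_le_iff₀ hs0]
    calc t ≤ ℓ / (2 * δ) * s := h
    _ = ℓ / (2 * δ) * s := rfl
  -- t ≤ ℓ
  have hcosh2 : Real.cosh (ℓ / 2) ≤ 2 :=
    my_cosh_le_two (by rw [abs_of_nonneg (by linarith : (0:ℝ) ≤ ℓ / 2)]; linarith)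
  have htℓ : t ≤ ℓ := by
    have h1 : t ≤ (ℓ / 2) * Real.cosh (ℓ / 2) := my_sinh_le_mul_cosh (by linarith)
    nlinarith
  -- lower bound on u : ℓ/(2δ) - 2ℓ ≤ u
  have hδs : δ ≤ s := Real.self_le_sinh_iff.2 hδ.le
  have hsub : s ≤ δ * Real.cosh δ := my_sinh_le_mul_cosh hδ.le
  have hcoshδ : Real.cosh δ ≤ 1 + s ^ 2 := by
    have hc1 : 1 ≤ Real.cosh δ := Real.one_le_cosh δ
    have hc2 : Real.cosh δ ^ 2 = s ^ 2 + 1 := Real.cosh_sq δ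
    nlinarith
  have htl : ℓ / 2 ≤ t := Real.self_le_sinh_iff.2 (by linarith)
  set c := Real.cosh δ with hc
  clear_value t s u c
  have hs2δ : s ≤ 2 * δ := by nlinarith
  have hsδ3 : s ≤ δ + 4 * δ ^ 3 := by
    have h1 : s ≤ δ * (1 + s ^ 2) := le_trans hsub (mul_le_mul_of_nonneg_left hcoshδ hδ.le)
    have h2 : s ^ 2 ≤ 4 * δ ^ 2 := by nlinarith
    nlinarith
  have hinv : 1 / δ - 4 ≤ 1 / s := by
    rw [le_div_iff₀ hs0]
    have hδ2s : δ ^ 2 ≤ s := by nlinarith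
    have h5 : s / δ ≤ 1 + 4 * δ ^ 2 := by
      rw [div_le_iff₀ hδ]; nlinarith
    have h6 : (1 / δ - 4) * s = s / δ - 4 * s := by
      field_simp
    rw [h6]
    linarith
  have hulb : ℓ / (2 * δ) - 2 * ℓ ≤ u := by
    have h1 : (ℓ / 2) * (1 / s) ≤ u := by
      rw [hu, div_eq_mul_inv, one_div]
      exact mul_le_mul_of_nonneg_right htl (by positivity)
    have h2 : (ℓ / 2) * (1 / δ - 4) ≤ (ℓ / 2) * (1 / s) :=
      mul_le_mul_of_nonneg_left hinv (by linarith)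
    have h3 : (ℓ / 2) * (1 / δ - 4) = ℓ / (2 * δ) - 2 * ℓ := by
      field_simp; ring
    linarith
  -- the difference
  have hD : collarX ℓ - collarXdelta δ ℓ
      = 2 * Real.pi / ℓ * (Real.arcsin u - Real.arctan t) := by
    rw [collarX, collarXdelta, ← ht, ← hs, ← hu]; ring
  have hcoef : 0 ≤ 2 * Real.pi / ℓ := by positivity
  constructor
  · -- lower bound
    have h1 : u ≤ Real.arcsin u := my_le_arcsin hu0 hu1
    have h2 : Real.arctan t ≤ t := my_arctan_le_self ht0.le
    have h3 : ℓ / (2 * δ) - 3 * ℓ ≤ Real.arcsin u - Real.arctan t := by linarith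
    have h4 : 2 * Real.pi / ℓ * (ℓ / (2 * δ) - 3 * ℓ)
        ≤ 2 * Real.pi / ℓ * (Real.arcsin u - Real.arctan t) :=
      mul_le_mul_of_nonneg_left h3 hcoef
    have h5 : 2 * Real.pi / ℓ * (ℓ / (2 * δ) - 3 * ℓ) = Real.pi / δ - 6 * Real.pi := by
      field_simp; ring
    rw [hD]; linarith
  · -- upper bound
    have h1 : Real.arcsin u ≤ Real.pi / 2 * u := my_arcsin_le hu0 hu1
    have h2 : 0 ≤ Real.arctan t := by
      have := Real.arctan_strictMono.monotone ht0.le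
      simpa [Real.arctan_zero] using this
    have h3 : Real.arcsin u - Real.arctan t ≤ Real.pi / 2 * (ℓ / (2 * δ)) := by
      have : Real.pi / 2 * u ≤ Real.pi / 2 * (ℓ / (2 * δ)) :=
        mul_le_mul_of_nonneg_left hu2 (by positivity)
      linarith
    have h4 : 2 * Real.pi / ℓ * (Real.arcsin u - Real.arctan t)
        ≤ 2 * Real.pi / ℓ * (Real.pi / 2 * (ℓ / (2 * δ))) :=
      mul_le_mul_of_nonneg_left h3 hcoef
    have h5 : 2 * Real.pi / ℓ * (Real.pi / 2 * (ℓ / (2 * δ))) = Real.pi ^ 2 / (2 * δ) := by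
      field_simp
    rw [hD]; linarith
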